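/- Let δ > 0, let γ ∈ (0,1], let w(1),…,w(n) be positive reals with partial sums W(0) = 0, W(t) = w(1)+⋯+w(t), let C ⊆ {1,…,n}, and fix t ∈ {1,…,n} and i ∈ {1,…,t}. For j ≤ t define q(j,t) = min{ 1, ((1+δ)/δ)·ln(4t³/γ)·w(j)/(W(t) − W(j−1)) }. If the interval [i,t] is not dangerous, i.e. w(C ∩ [i,t]) > (δ/(1+δ))·w([i,t]), then ∏_{j ∈ C ∩ [i,t]} (1 − q(j,t)) ≤ γ/(4t³). -/

import Mathlib

/-- With `q(j,t) = min{1, ((1+δ)/δ)·ln(4t³/γ)·w(j)/(W(t) − W(j−1))}`,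
if the interval `[i,t]` is not dangerous, i.e. `w(C ∩ [i,t]) > (δ/(1+δ))·w([i,t])`,
then `∏_{j ∈ C ∩ [i,t]} (1 − q(j,t)) ≤ γ/(4t³)`. -/
theorem unsafe_probability_bound (n : ℕ) (δ γ : ℝ) (hδ : 0 < δ) (hγ0 : 0 < γ)
    (hγ1 : γ ≤ 1)
    (w : ℕ → ℝ) (hw : ∀ j, 1 ≤ j → j ≤ n → 0 < w j)
    (W : ℕ → ℝ) (hW0 : W 0 = 0) (hW : ∀ k, W k = ∑ j ∈ Finset.Icc 1 k, w j)
    (C : Finset ℕ) (hC : C ⊆ Finset.Icc 1 n)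
    (t : ℕ) (ht1 : 1 ≤ t) (htn : t ≤ n)
    (i : ℕ) (hi1 : 1 ≤ i) (hit : i ≤ t)
    (q : ℕ → ℕ → ℝ)
    (hq : ∀ j, 1 ≤ j → j ≤ t →
      q j t = min 1 (((1 + δ) / δ) * Real.log (4 * t ^ 3 / γ) * w j / (W t - W (j - 1))))
    (hnd : (δ / (1 + δ)) * (W t - W (i - 1)) < ∑ j ∈ C ∩ Finset.Icc i t, w j) :
    ∏ j ∈ C ∩ Finset.Icc i t, (1 - q j t) ≤ γ / (4 * t ^ 3) := by
  classical
  set S := C ∩ Finset.Icc i t with hSdef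
  have ht0 : (1:ℝ) ≤ (t:ℝ) := by exact_mod_cast ht1
  have hX1 : (1:ℝ) < 4 * (t:ℝ) ^ 3 / γ := by
    have : (1:ℝ) ≤ (t:ℝ)^3 := one_le_pow₀ ht0
    rw [lt_div_iff₀ hγ0]; nlinarith
  have hX0 : (0:ℝ) < 4 * (t:ℝ) ^ 3 / γ := by linarith
  have hlogpos : 0 < Real.log (4 * (t:ℝ) ^ 3 / γ) := Real.log_pos hX1
  set L := ((1 + δ) / δ) * Real.log (4 * (t:ℝ) ^ 3 / γ) with hLdef
  have hLpos : 0 < L := by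
    apply mul_pos (div_pos (by linarith) hδ) hlogpos
  -- W differences
  have hWIoc : ∀ a b : ℕ, a ≤ b → W b - W a = ∑ j ∈ Finset.Ioc a b, w j := by
    intro a b hab
    have h1 : ∀ k, W k = ∑ j ∈ Finset.Ioc 0 k, w j := by
      intro k; rw [hW k]; congr 1
    rw [h1, h1]
    have := Finset.sum_Ioc_consecutive w (Nat.zero_le a) hab
    linarith
  have hmemS : ∀ j ∈ S, 1 ≤ j ∧ i ≤ j ∧ j ≤ t := by
    intro j hj
    rw [hSdef, Finset.mem_inter, Finset.mem_Icc] at hj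
    exact ⟨le_trans hi1 hj.2.1, hj.2.1, hj.2.2⟩
  have hdiffpos : ∀ a : ℕ, a < t → 0 < W t - W a := by
    intro a ha
    rw [hWIoc a t (le_of_lt ha)]
    apply Finset.sum_pos
    · intro k hk
      rw [Finset.mem_Ioc] at hk
      exact hw k (Nat.one_le_iff_ne_zero.mpr (by omega)) (le_trans hk.2 htn)
    · exact ⟨t, Finset.mem_Ioc.mpr ⟨ha, le_refl t⟩⟩
  have hDpos : 0 < W t - W (i - 1) := hdiffpos (i-1) (by omega)
  have hWmono : ∀ a b : ℕ, a ≤ b → b ≤ t → W a ≤ W b := by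
    intro a b hab hbt
    have := hWIoc a b hab
    have hnn : 0 ≤ ∑ j ∈ Finset.Ioc a b, w j := by
      apply Finset.sum_nonneg
      intro k hk
      rw [Finset.mem_Ioc] at hk
      exact le_of_lt (hw k (Nat.one_le_iff_ne_zero.mpr (by omega)) (le_trans hk.2 (le_trans hbt htn)))
    linarith
  have hqle1 : ∀ j ∈ S, q j t ≤ 1 := by
    intro j hj
    obtain ⟨h1, _, h3⟩ := hmemS j hj
    rw [hq j h1 h3]; exact min_le_left _ _
  by_cases hex : ∃ j ∈ S, q j t = 1
  · obtain ⟨j₀, hj₀, hq₀⟩ := hex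
    have : ∏ j ∈ S, (1 - q j t) = 0 := Finset.prod_eq_zero hj₀ (by rw [hq₀]; ring)
    rw [this]
    positivity
  · push_neg at hex
    have hqv : ∀ j ∈ S, q j t = L * w j / (W t - W (j - 1)) := by
      intro j hj
      obtain ⟨h1, _, h3⟩ := hmemS j hj
      have := hq j h1 h3
      rcases min_cases 1 (L * w j / (W t - W (j - 1))) with ⟨he, hle⟩ | ⟨he, _⟩
      · exact absurd (this.trans he) (hex j hj)
      · exact this.trans he
    -- sum lower bound
    have hsum : Real.log (4 * (t:ℝ) ^ 3 / γ) ≤ ∑ j ∈ S, q j t := by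
      have step1 : ∀ j ∈ S, L * w j / (W t - W (i - 1)) ≤ q j t := by
        intro j hj
        obtain ⟨h1, h2, h3⟩ := hmemS j hj
        rw [hqv j hj]
        have hjd : 0 < W t - W (j - 1) := hdiffpos (j-1) (by omega)
        have hle : W t - W (j-1) ≤ W t - W (i-1) := by
          have := hWmono (i-1) (j-1) (by omega) (by omega)
          linarith
        have hwj : 0 ≤ L * w j := le_of_lt (mul_pos hLpos (hw j h1 (le_trans h3 htn)))
        gcongr
      calc Real.log (4 * (t:ℝ) ^ 3 / γ)
          = L / (W t - W (i-1)) * ((δ / (1 + δ)) * (W t - W (i - 1))) := by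
            field_simp [hLdef]
            rw [hLdef]; field_simp
        _ ≤ L / (W t - W (i-1)) * (∑ j ∈ S, w j) := by
            apply mul_le_mul_of_nonneg_left (le_of_lt hnd)
            positivity
        _ = ∑ j ∈ S, L * w j / (W t - W (i - 1)) := by
            rw [Finset.mul_sum]; apply Finset.sum_congr rfl; intro j _; ring
        _ ≤ ∑ j ∈ S, q j t := Finset.sum_le_sum step1
    calc ∏ j ∈ S, (1 - q j t)
        ≤ ∏ j ∈ S, Real.exp (-(q j t)) := by
          apply Finset.prod_le_prod
          · intro j hj; linarith [hqle1 j hj]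
          · intro j hj
            have := Real.add_one_le_exp (-(q j t))
            linarith
      _ = Real.exp (∑ j ∈ S, -(q j t)) := (Real.exp_sum _ _).symm
      _ = Real.exp (-(∑ j ∈ S, q j t)) := by rw [Finset.sum_neg_distrib]
      _ ≤ Real.exp (-(Real.log (4 * (t:ℝ) ^ 3 / γ))) := by
          apply Real.exp_le_exp.mpr; linarith
      _ = γ / (4 * (t:ℝ) ^ 3) := by
          rw [Real.exp_neg, Real.exp_log hX0]
          field_simp
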